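/- arXiv:2408.07821 — 7 statements merged into one kernel-verified Lean document; each statement's English description precedes it below -/
import Mathlib

section
/- Suppose ∑_i log(e_i) ≥ 0, let z = f(max_i v_i(G)/e_i) where f(x) = (x + x³/3)/ln(1+x), let A^DEC maximize ∑_i u_i(A_i) over all allocations and A^OPT maximize Nash welfare ∑_i log(v_i(A_i)+e_i). Then z · NW(A^DEC) ≥ NW(A^OPT). -/
open Finset

/-- The value an agent `i` has for their bundle under assignment `A`. -/
def bundleVal {N G : Type*} [Fintype G] [DecidableEq N]
    (v : N → G → ℝ) (A : G → N) (i : N) : ℝ :=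
  ∑ g ∈ Finset.univ.filter (fun g => A g = i), v i g

/-- Nash welfare of an assignment. -/
noncomputable def NW {N G : Type*} [Fintype N] [Fintype G] [DecidableEq N]
    (v : N → G → ℝ) (e : N → ℝ) (A : G → N) : ℝ :=
  ∑ i, Real.log (bundleVal v A i + e i)

/-- The decentralized objective `∑ i, u_i(A_i)`. -/
noncomputable def uSum {N G : Type*} [Fintype N] [Fintype G] [DecidableEq N]
    (v : N → G → ℝ) (e : N → ℝ) (A : G → N) : ℝ :=
  ∑ i, ∑ g ∈ Finset.univ.filter (fun g => A g = i),
    (Real.log (v i g + e i) - Real.log (e i))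


lemma chordLog {M x : ℝ} (hM : 0 < M) (hx0 : 0 ≤ x) (hxM : x ≤ M) :
    (x / M) * Real.log (1 + M) ≤ Real.log (1 + x) := by
  set t := x / M with ht
  have ht0 : 0 ≤ t := div_nonneg hx0 hM.le
  have ht1 : t ≤ 1 := (div_le_one hM).2 hxM
  have h1 : (1:ℝ) ∈ Set.Ioi (0:ℝ) := by norm_num
  have h2 : (1+M) ∈ Set.Ioi (0:ℝ) := by simp; linarith
  have := (strictConcaveOn_log_Ioi.concaveOn).2 h1 h2
    (sub_nonneg.2 ht1) ht0 (by ring : (1 - t) + t = 1)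
  simp only [smul_eq_mul, Real.log_one, mul_zero, zero_add] at this
  have htM : t * M = x := div_mul_cancel₀ x hM.ne'
  have heq : (1 - t) * 1 + t * (1 + M) = 1 + x := by
    rw [show (1 - t) * 1 + t * (1 + M) = 1 + t * M from by ring, htM]
  rwa [heq] at this

-- superadditivity: log(∑ w + e) - log e ≤ ∑ (log(w+e) - log e)
lemma ustar_le_u {G : Type*} [DecidableEq G] (s : Finset G) (w : G → ℝ) (hw : ∀ g, 0 ≤ w g)
    {e : ℝ} (he : 0 < e) :
    Real.log (∑ g ∈ s, w g + e) - Real.log e ≤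
      ∑ g ∈ s, (Real.log (w g + e) - Real.log e) := by
  induction s using Finset.induction_on with
  | empty => simp
  | insert _ _ hnotmem ih =>
    rename_i a s
    rw [Finset.sum_insert hnotmem, Finset.sum_insert hnotmem]
    have hS : 0 ≤ ∑ g ∈ s, w g := Finset.sum_nonneg fun g _ => hw g
    have key : Real.log (w a + ∑ g ∈ s, w g + e) ≤
        Real.log (w a + e) + Real.log (∑ g ∈ s, w g + e) - Real.log e := by
      have hmul : (w a + ∑ g ∈ s, w g + e) * e ≤ (w a + e) * (∑ g ∈ s, w g + e) := by
        nlinarith [hw a, hS, he.le]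
      have h1 : Real.log ((w a + ∑ g ∈ s, w g + e) * e) ≤
          Real.log ((w a + e) * (∑ g ∈ s, w g + e)) :=
        Real.log_le_log (by nlinarith [hw a, hS, he]) hmul
      rw [Real.log_mul (by nlinarith [hw a, hS, he]) he.ne', Real.log_mul (by nlinarith [hw a, he]) (by nlinarith [hS, he])] at h1
      linarith
    linarith [ih]

lemma u_le_x {G : Type*} (s : Finset G) (w : G → ℝ) (hw : ∀ g, 0 ≤ w g)
    {e : ℝ} (he : 0 < e) :
    ∑ g ∈ s, (Real.log (w g + e) - Real.log e) ≤ (∑ g ∈ s, w g) / e := by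
  rw [Finset.sum_div]
  apply Finset.sum_le_sum
  intro g _
  have : Real.log (w g + e) - Real.log e = Real.log ((w g + e) / e) := by
    rw [Real.log_div (by nlinarith [hw g, he]) he.ne']
  rw [this]
  have hpos : 0 < (w g + e) / e := div_pos (by nlinarith [hw g, he]) he
  have := Real.log_le_sub_one_of_pos hpos
  have : Real.log ((w g + e)/e) ≤ (w g + e)/e - 1 := this
  have heq : (w g + e)/e - 1 = w g / e := by field_simp; ring
  linarith [heq ▸ this]
theorem stmt3 {N G : Type*} [Fintype N] [Fintype G] [Nonempty N] [DecidableEq N]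
    (v : N → G → ℝ) (hv : ∀ i g, 0 ≤ v i g)
    (e : N → ℝ) (he : ∀ i, 0 < e i)
    (hE : 0 ≤ ∑ i, Real.log (e i))
    (M : ℝ) (hMpos : 0 < M)
    (hM : IsGreatest (Set.range fun i => (∑ g, v i g) / e i) M)
    (z : ℝ) (hz : z = (M + M ^ 3 / 3) / Real.log (1 + M))
    (Adec Aopt : G → N)
    (hdec : ∀ A : G → N, uSum v e A ≤ uSum v e Adec)
    (hopt : ∀ A : G → N, NW v e A ≤ NW v e Aopt) :
    NW v e Aopt ≤ z * NW v e Adec := by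
  classical
  set E := ∑ i, Real.log (e i) with hEdef
  have hlogM : 0 < Real.log (1 + M) := Real.log_pos (by linarith)
  have hzlog : z * Real.log (1 + M) = M + M ^ 3 / 3 := by
    rw [hz]; field_simp
  have hz1 : 1 ≤ z := by
    rw [hz, le_div_iff₀ hlogM]
    have h1 : Real.log (1 + M) ≤ M := by
      have := Real.log_le_sub_one_of_pos (show (0:ℝ) < 1 + M by linarith)
      linarith
    nlinarith [pow_pos hMpos 3]
  have hz0 : 0 ≤ z := by linarith
  have hbV : ∀ (A : G → N) (i : N), 0 ≤ bundleVal v A i := fun A i =>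
    Finset.sum_nonneg fun g _ => hv i g
  have hVle : ∀ (A : G → N) (i : N), bundleVal v A i ≤ M * e i := by
    intro A i
    have h1 : bundleVal v A i ≤ ∑ g, v i g :=
      Finset.sum_le_sum_of_subset_of_nonneg (Finset.filter_subset _ _)
        (fun g _ _ => hv i g)
    have h2 : (∑ g, v i g) / e i ≤ M := hM.2 ⟨i, rfl⟩
    have := (div_le_iff₀ (he i)).1 h2
    linarith
  have key1 : ∀ A : G → N, NW v e A - E ≤ uSum v e A := by
    intro A
    rw [NW, uSum, hEdef, ← Finset.sum_sub_distrib]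
    apply Finset.sum_le_sum
    intro i _
    exact ustar_le_u _ (fun g => v i g) (hv i) (he i)
  have key2 : uSum v e Adec ≤ z * (NW v e Adec - E) := by
    rw [NW, uSum, hEdef, ← Finset.sum_sub_distrib, Finset.mul_sum]
    apply Finset.sum_le_sum
    intro i _
    set V := bundleVal v Adec i with hV
    set x := V / e i with hx
    have hx0 : 0 ≤ x := div_nonneg (hbV Adec i) (he i).le
    have hxM : x ≤ M := (div_le_iff₀ (he i)).2 (by linarith [hVle Adec i])
    have hstar : Real.log (V + e i) - Real.log (e i) = Real.log (1 + x) := by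
      rw [← Real.log_div (by nlinarith [hbV Adec i, he i]) (he i).ne']
      rw [hx, add_div, div_self (he i).ne', add_comm]
    have hu : ∑ g ∈ Finset.univ.filter (fun g => Adec g = i),
        (Real.log (v i g + e i) - Real.log (e i)) ≤ x := by
      have := u_le_x (Finset.univ.filter (fun g => Adec g = i)) (fun g => v i g)
        (hv i) (he i)
      simpa [hx, hV, bundleVal] using this
    have hchord : (x / M) * Real.log (1 + M) ≤ Real.log (1 + x) :=
      chordLog hMpos hx0 hxM
    have h3 : z * ((x / M) * Real.log (1 + M)) ≤ z * Real.log (1 + x) :=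
      mul_le_mul_of_nonneg_left hchord hz0
    have h4 : z * ((x / M) * Real.log (1 + M)) = (x / M) * (M + M ^ 3 / 3) := by
      rw [← hzlog]; ring
    have h5 : x ≤ (x / M) * (M + M ^ 3 / 3) := by
      rw [div_mul_eq_mul_div, le_div_iff₀ hMpos]
      nlinarith [mul_nonneg hx0 (pow_pos hMpos 3).le]
    rw [hstar]
    linarith
  have h6 : NW v e Aopt ≤ uSum v e Adec + E := by
    have := key1 Aopt
    have := hdec Aopt
    linarith
  have h7 : z * (NW v e Adec - E) + E ≤ z * NW v e Adec := by nlinarith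
  linarith [key2]
end

section
/- Suppose all nonzero valuations lie in the interval [ℓ, h] with 0 < ℓ ≤ h (0–ℓ–h valuations). If e_i < (ℓ/h)·e_j, then in the decentralized solution A^DEC (where each good g goes to an agent maximizing v_k(g)/e_k), agent j's bundle contains no good that agent i values positively, hence v_i(A^DEC_i) ≥ v_i(A^DEC_j). -/
open Finset

theorem stmt8 {N G : Type*} [Fintype G] [DecidableEq N]
    (ℓ h : ℝ) (hℓ : 0 < ℓ) (hℓh : ℓ ≤ h)
    (v : N → G → ℝ)
    (hvals : ∀ k g, v k g = 0 ∨ v k g ∈ Set.Icc ℓ h)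
    (e : N → ℝ) (he : ∀ k, 0 < e k)
    (A : G → N)
    -- each good is assigned to an agent maximizing v_k(g)/e_k
    (hA : ∀ g k, v k g / e k ≤ v (A g) g / e (A g))
    (i j : N) (hij : e i < (ℓ / h) * e j) :
    (∀ g, A g = j → v i g = 0) ∧
    (∑ g ∈ Finset.univ.filter (fun g => A g = j), v i g
      ≤ ∑ g ∈ Finset.univ.filter (fun g => A g = i), v i g) := by
  have hh : (0:ℝ) < h := lt_of_lt_of_le hℓ hℓh
  have key : ∀ g, A g = j → v i g = 0 := by
    intro g hg
    rcases hvals i g with h0 | ⟨hl, _⟩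
    · exact h0
    exfalso
    have h1 := hA g i
    rw [hg] at h1
    have h2 : v j g ≤ h := by
      rcases hvals j g with h0 | ⟨_, hu⟩
      · rw [h0]; exact le_of_lt hh
      · exact hu
    have h1' : v i g * e j ≤ v j g * e i := (div_le_div_iff₀ (he i) (he j)).mp h1
    have hij' : h * e i < ℓ * e j := by
      rw [div_mul_eq_mul_div, lt_div_iff₀ hh] at hij
      linarith
    nlinarith [he i, he j, (he i).le, (he j).le]
  refine ⟨key, ?_⟩
  have hz : ∑ g ∈ Finset.univ.filter (fun g => A g = j), v i g = 0 := by
    apply Finset.sum_eq_zero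
    intro g hg
    exact key g (Finset.mem_filter.mp hg).2
  rw [hz]
  apply Finset.sum_nonneg
  intro g _
  rcases hvals i g with h0 | ⟨hl, _⟩
  · exact le_of_eq h0.symm
  · exact le_of_lt (lt_of_lt_of_le hℓ hl)
end

section
/- If valuations are drawn from {0, h} for a fixed h > 0, then the decentralized solution is endowment-relative envy-free: for all agents i, j with e_i < e_j, v_i(A^DEC_i) ≥ v_i(A^DEC_j). -/
open Finset

theorem stmt9 {N G : Type*} [Fintype G] [DecidableEq N]
    (h : ℝ) (hh : 0 < h)
    (v : N → G → ℝ)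
    (hvals : ∀ k g, v k g = 0 ∨ v k g = h)
    (e : N → ℝ) (he : ∀ k, 0 < e k)
    (A : G → N)
    -- each good is assigned to an agent maximizing v_k(g)/e_k
    (hA : ∀ g k, v k g / e k ≤ v (A g) g / e (A g))
    (i j : N) (hij : e i < e j) :
    ∑ g ∈ Finset.univ.filter (fun g => A g = j), v i g
      ≤ ∑ g ∈ Finset.univ.filter (fun g => A g = i), v i g := by
  have hL : ∑ g ∈ Finset.univ.filter (fun g => A g = j), v i g = 0 := by
    apply Finset.sum_eq_zero
    intro g hg
    simp only [Finset.mem_filter] at hg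
    by_contra hne
    rcases hvals i g with h0 | hH
    · exact hne h0
    have := hA g i
    rw [hg.2, hH] at this
    rcases hvals j g with h0 | hH'
    · rw [h0, zero_div] at this
      have := div_pos hh (he i)
      linarith
    · rw [hH'] at this
      have := (div_le_div_iff₀ (he i) (he j)).mp this
      nlinarith
  rw [hL]
  apply Finset.sum_nonneg
  intro g _
  rcases hvals i g with h0 | h0 <;> simp [h0, hh.le]
end

section
/- Let X and Y be independent real-valued random variables with Y admitting a density, and let Z be any event. Then E[X | Z ∧ (X ≥ Y)] ≥ E[X | Z ∧ (X ≤ Y)], whenever these conditional expectations are defined. -/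
open MeasureTheory ProbabilityTheory

section Aux

variable {Ω : Type*} [MeasurableSpace Ω] (μ : Measure Ω) [IsProbabilityMeasure μ]

/-- Pointwise key inequality: the average of `X` over `Z ∩ {X ≤ y}` is at most the
average of `X` over `Z` (in cross-multiplied form, valid also for null sets). -/
lemma stmt10_pointwise (X : Ω → ℝ) (hXint : Integrable X μ) (hXm : Measurable X)
    (Z : Set Ω) (hZ : MeasurableSet Z) (y : ℝ) :
    (μ Z).toReal * ∫ ω in Z ∩ {ω | X ω ≤ y}, X ω ∂μ
      ≤ (∫ ω in Z, X ω ∂μ) * (μ (Z ∩ {ω | X ω ≤ y})).toReal := by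
  set A := Z ∩ {ω | X ω ≤ y} with hA
  set C := Z ∩ {ω | y < X ω} with hC
  have hAm : MeasurableSet A := hZ.inter (hXm measurableSet_Iic)
  have hCm : MeasurableSet C := hZ.inter (hXm measurableSet_Ioi)
  have hdisj : Disjoint A C := by
    rw [Set.disjoint_left]
    rintro ω ⟨-, (h1 : X ω ≤ y)⟩ ⟨-, (h2 : y < X ω)⟩
    exact absurd h1 (not_le.2 h2)
  have hunion : A ∪ C = Z := by
    rw [hA, hC, ← Set.inter_union_distrib_left]
    have : {ω | X ω ≤ y} ∪ {ω | y < X ω} = Set.univ := by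
      ext ω; simp [le_or_gt]
    rw [this, Set.inter_univ]
  have hg : ∫ ω in A, X ω ∂μ ≤ y * (μ A).toReal := by
    have h := setIntegral_mono_on hXint.integrableOn
      (integrableOn_const (measure_ne_top μ A)) hAm
      (fun ω hω => hω.2)
    rwa [setIntegral_const, smul_eq_mul, measureReal_def, mul_comm] at h
  have he : y * (μ C).toReal ≤ ∫ ω in C, X ω ∂μ := by
    have := setIntegral_ge_of_const_le_real hCm (measure_ne_top μ C)
      (fun ω hω => le_of_lt hω.2) hXint.integrableOn
    rwa [measureReal_def] at this
  have hEsplit : ∫ ω in Z, X ω ∂μ = (∫ ω in A, X ω ∂μ) + ∫ ω in C, X ω ∂μ := by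
    rw [← hunion]
    exact setIntegral_union hdisj hCm hXint.integrableOn hXint.integrableOn
  have hPsplit : (μ Z).toReal = (μ A).toReal + (μ C).toReal := by
    rw [← hunion, measure_union hdisj hCm,
      ENNReal.toReal_add (measure_ne_top μ A) (measure_ne_top μ C)]
  have h1 : (μ C).toReal * (∫ ω in A, X ω ∂μ) ≤ (μ C).toReal * (y * (μ A).toReal) :=
    mul_le_mul_of_nonneg_left hg ENNReal.toReal_nonneg
  have h2 : (y * (μ C).toReal) * (μ A).toReal ≤ (∫ ω in C, X ω ∂μ) * (μ A).toReal :=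
    mul_le_mul_of_nonneg_right he ENNReal.toReal_nonneg
  rw [hPsplit, hEsplit, add_mul, add_mul]
  linarith [h1, h2]

/-- Decomposition via independence: integrals of the form
`∫ I_Z · I_S(X, Y) · u(X)` decompose as an integral over the law of `Y`. -/
lemma stmt10_decomp (X Y : Ω → ℝ) (hXm : Measurable X) (hYm : Measurable Y)
    (Z : Set Ω) (hZ : MeasurableSet Z)
    (hindep : IndepFun (fun ω => (X ω, Z.indicator (fun _ => (1 : ℝ)) ω)) Y μ)
    (u : ℝ → ℝ) (hu : Measurable u) (huint : Integrable (fun ω => u (X ω)) μ)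
    (S : Set (ℝ × ℝ)) (hS : MeasurableSet S) :
    ((∫ ω, Z.indicator (fun _ => (1:ℝ)) ω * S.indicator (fun _ => (1:ℝ)) (X ω, Y ω) * u (X ω) ∂μ)
      = ∫ y, (∫ ω, Z.indicator (fun _ => (1:ℝ)) ω * S.indicator (fun _ => (1:ℝ)) (X ω, y) * u (X ω) ∂μ) ∂(μ.map Y))
    ∧ Integrable (fun y => ∫ ω, Z.indicator (fun _ => (1:ℝ)) ω * S.indicator (fun _ => (1:ℝ)) (X ω, y) * u (X ω) ∂μ) (μ.map Y) := by
  have hIm : Measurable (Z.indicator (fun _ => (1:ℝ))) := measurable_const.indicator hZ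
  set I : Ω → ℝ := Z.indicator (fun _ => (1:ℝ)) with hIdef
  set W : Ω → ℝ × ℝ := fun ω => (X ω, I ω) with hWdef
  have hWm : Measurable W := hXm.prodMk hIm
  set κ : Measure (ℝ × ℝ) := μ.map W with hκ
  set ν : Measure ℝ := μ.map Y with hν
  haveI : IsProbabilityMeasure κ := Measure.isProbabilityMeasure_map hWm.aemeasurable
  haveI : IsProbabilityMeasure ν := Measure.isProbabilityMeasure_map hYm.aemeasurable
  set T : Set ((ℝ × ℝ) × ℝ) := {p | (p.1.1, p.2) ∈ S} with hT
  have hTm : MeasurableSet T := hS.preimage ((measurable_fst.fst).prodMk measurable_snd)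
  set Φ : (ℝ × ℝ) × ℝ → ℝ := T.indicator (fun q => q.1.2 * u q.1.1) with hΦ
  have hΦm : Measurable Φ :=
    ((measurable_fst.snd).mul (hu.comp measurable_fst.fst)).indicator hTm
  have key : ∀ (y : ℝ) (ω : Ω),
      I ω * S.indicator (fun _ => (1:ℝ)) (X ω, y) * u (X ω) = Φ (W ω, y) := by
    intro y ω
    by_cases h : (X ω, y) ∈ S
    · have h' : ((W ω, y) : (ℝ × ℝ) × ℝ) ∈ T := h
      rw [hΦ, Set.indicator_of_mem h', Set.indicator_of_mem h]
      simp [hWdef]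
    · have h' : ((W ω, y) : (ℝ × ℝ) × ℝ) ∉ T := h
      rw [hΦ, Set.indicator_of_notMem h', Set.indicator_of_notMem h]
      ring
  have hmap : μ.map (fun ω => (W ω, Y ω)) = κ.prod ν :=
    (indepFun_iff_map_prod_eq_prod_map_map hWm.aemeasurable hYm.aemeasurable).mp hindep
  -- integrability on the product
  have hgm : Measurable (fun w : ℝ × ℝ => w.2 * u w.1) :=
    measurable_snd.mul (hu.comp measurable_fst)
  have hcomp : Integrable (fun ω => I ω * u (X ω)) μ := by
    apply huint.mono ((hIm.mul (hu.comp hXm)).aestronglyMeasurable)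
    filter_upwards with ω
    by_cases hω : ω ∈ Z
    · simp [hIdef, Set.indicator_of_mem hω]
    · simp [hIdef, Set.indicator_of_notMem hω]
  have hfκ : Integrable (fun w : ℝ × ℝ => w.2 * u w.1) κ := by
    rw [hκ, integrable_map_measure hgm.aestronglyMeasurable hWm.aemeasurable]
    exact hcomp
  have hprodint : Integrable (fun p : (ℝ × ℝ) × ℝ => p.1.2 * u p.1.1) (κ.prod ν) := by
    have hmfst : (κ.prod ν).map Prod.fst = κ := by
      rw [Measure.map_fst_prod]; simp
    rw [← hmfst] at hfκ
    exact (integrable_map_measure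
      (hgm.aestronglyMeasurable.mono_measure le_rfl |>.congr (Filter.Eventually.of_forall fun _ => rfl))
      measurable_fst.aemeasurable).mp hfκ
  have hΦint : Integrable Φ (κ.prod ν) := hprodint.indicator hTm
  have h1 : ∫ ω, Φ (W ω, Y ω) ∂μ = ∫ p, Φ p ∂(κ.prod ν) := by
    rw [← hmap]
    exact (integral_map (hWm.prodMk hYm).aemeasurable hΦm.aestronglyMeasurable).symm
  have h2 : ∫ p, Φ p ∂(κ.prod ν) = ∫ y, ∫ w, Φ (w, y) ∂κ ∂ν := integral_prod_symm Φ hΦint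
  have h3 : ∀ y : ℝ, ∫ w, Φ (w, y) ∂κ = ∫ ω, Φ (W ω, y) ∂μ := fun y =>
    integral_map hWm.aemeasurable
      (hΦm.comp (measurable_id.prodMk measurable_const)).aestronglyMeasurable
  have hint2 : Integrable (fun y => ∫ w, Φ (w, y) ∂κ) ν := hΦint.integral_prod_right
  constructor
  · calc (∫ ω, I ω * S.indicator (fun _ => (1:ℝ)) (X ω, Y ω) * u (X ω) ∂μ)
        = ∫ ω, Φ (W ω, Y ω) ∂μ :=
          integral_congr_ae (Filter.Eventually.of_forall fun ω => key (Y ω) ω)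
      _ = ∫ p, Φ p ∂(κ.prod ν) := h1
      _ = ∫ y, ∫ w, Φ (w, y) ∂κ ∂ν := h2
      _ = ∫ y, (∫ ω, I ω * S.indicator (fun _ => (1:ℝ)) (X ω, y) * u (X ω) ∂μ) ∂ν := by
          refine integral_congr_ae (Filter.Eventually.of_forall fun y => ?_)
          show ∫ w, Φ (w, y) ∂κ = ∫ ω, I ω * S.indicator (fun _ => (1:ℝ)) (X ω, y) * u (X ω) ∂μ
          rw [h3 y]
          exact integral_congr_ae (Filter.Eventually.of_forall fun ω => (key y ω).symm)
  · apply hint2.congr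
    filter_upwards with y
    show ∫ w, Φ (w, y) ∂κ = ∫ ω, I ω * S.indicator (fun _ => (1:ℝ)) (X ω, y) * u (X ω) ∂μ
    rw [h3 y]
    exact integral_congr_ae (Filter.Eventually.of_forall fun ω => (key y ω).symm)

end Aux

theorem stmt10 {Ω : Type*} [MeasurableSpace Ω] (μ : Measure Ω) [IsProbabilityMeasure μ]
    (X Y : Ω → ℝ) (hXint : Integrable X μ)
    (hXm : Measurable X) (hYm : Measurable Y)
    (Z : Set Ω) (hZ : MeasurableSet Z)
    -- the pair (X, 1_Z) is independent of Y
    (hindep : IndepFun (fun ω => (X ω, Z.indicator (fun _ => (1 : ℝ)) ω)) Y μ)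
    -- Y admits a probability density function
    [HasPDF Y μ]
    (hpos₁ : 0 < μ (Z ∩ {ω | Y ω ≤ X ω}))
    (hpos₂ : 0 < μ (Z ∩ {ω | X ω ≤ Y ω})) :
    (∫ ω in Z ∩ {ω | X ω ≤ Y ω}, X ω ∂μ) / (μ (Z ∩ {ω | X ω ≤ Y ω})).toReal
      ≤ (∫ ω in Z ∩ {ω | Y ω ≤ X ω}, X ω ∂μ) / (μ (Z ∩ {ω | Y ω ≤ X ω})).toReal := by
  classical
  set ν : Measure ℝ := μ.map Y with hν
  haveI : IsProbabilityMeasure ν := Measure.isProbabilityMeasure_map hYm.aemeasurable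
  set I : Ω → ℝ := Z.indicator (fun _ => (1:ℝ)) with hIdef
  set S₁ : Set (ℝ × ℝ) := {p | p.1 ≤ p.2} with hS₁
  set S₂ : Set (ℝ × ℝ) := {p | p.2 ≤ p.1} with hS₂
  have hS₁m : MeasurableSet S₁ := measurableSet_le measurable_fst measurable_snd
  have hS₂m : MeasurableSet S₂ := measurableSet_le measurable_snd measurable_fst
  -- pointwise identification of integrands with indicators of sets
  have hpt₁ : ∀ (v : Ω → ℝ) (y : ℝ) (ω : Ω),
      I ω * S₁.indicator (fun _ => (1:ℝ)) (X ω, y) * v ω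
        = (Z ∩ {ω | X ω ≤ y}).indicator v ω := by
    intro v y ω
    by_cases h1 : ω ∈ Z <;> by_cases h2 : X ω ≤ y <;>
      simp [hIdef, hS₁, Set.indicator_apply, h1, h2]
  have hpt₂ : ∀ (v : Ω → ℝ) (y : ℝ) (ω : Ω),
      I ω * S₂.indicator (fun _ => (1:ℝ)) (X ω, y) * v ω
        = (Z ∩ {ω | y ≤ X ω}).indicator v ω := by
    intro v y ω
    by_cases h1 : ω ∈ Z <;> by_cases h2 : y ≤ X ω <;>
      simp [hIdef, hS₂, Set.indicator_apply, h1, h2]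
  have hptY₁ : ∀ (v : Ω → ℝ) (ω : Ω),
      I ω * S₁.indicator (fun _ => (1:ℝ)) (X ω, Y ω) * v ω
        = (Z ∩ {ω | X ω ≤ Y ω}).indicator v ω := by
    intro v ω
    by_cases h1 : ω ∈ Z <;> by_cases h2 : X ω ≤ Y ω <;>
      simp [hIdef, hS₁, Set.indicator_apply, h1, h2]
  have hptY₂ : ∀ (v : Ω → ℝ) (ω : Ω),
      I ω * S₂.indicator (fun _ => (1:ℝ)) (X ω, Y ω) * v ω
        = (Z ∩ {ω | Y ω ≤ X ω}).indicator v ω := by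
    intro v ω
    by_cases h1 : ω ∈ Z <;> by_cases h2 : Y ω ≤ X ω <;>
      simp [hIdef, hS₂, Set.indicator_apply, h1, h2]
  -- measurable sets
  have hm₁ : ∀ y : ℝ, MeasurableSet (Z ∩ {ω | X ω ≤ y}) :=
    fun y => hZ.inter (hXm measurableSet_Iic)
  have hm₂ : ∀ y : ℝ, MeasurableSet (Z ∩ {ω | y ≤ X ω}) :=
    fun y => hZ.inter (hXm measurableSet_Ici)
  have hmY₁ : MeasurableSet (Z ∩ {ω | X ω ≤ Y ω}) :=
    hZ.inter (measurableSet_le hXm hYm)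
  have hmY₂ : MeasurableSet (Z ∩ {ω | Y ω ≤ X ω}) :=
    hZ.inter (measurableSet_le hYm hXm)
  -- abbreviations
  set g : ℝ → ℝ := fun y => ∫ ω in Z ∩ {ω | X ω ≤ y}, X ω ∂μ with hgdef
  set h : ℝ → ℝ := fun y => ∫ ω in Z ∩ {ω | y ≤ X ω}, X ω ∂μ with hhdef
  set F : ℝ → ℝ := fun y => (μ (Z ∩ {ω | X ω ≤ y})).toReal with hFdef
  set q : ℝ → ℝ := fun y => (μ (Z ∩ {ω | y ≤ X ω})).toReal with hqdef
  have honeint : Integrable (fun ω => (fun _ : ℝ => (1:ℝ)) (X ω)) μ := integrable_const 1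
  have hXint' : Integrable (fun ω => (fun x : ℝ => x) (X ω)) μ := hXint
  -- apply `stmt10_decomp` four times
  have D₁ := stmt10_decomp μ X Y hXm hYm Z hZ hindep (fun x => x) measurable_id hXint' S₁ hS₁m
  have D₂ := stmt10_decomp μ X Y hXm hYm Z hZ hindep (fun _ => (1:ℝ)) measurable_const honeint S₁ hS₁m
  have D₃ := stmt10_decomp μ X Y hXm hYm Z hZ hindep (fun x => x) measurable_id hXint' S₂ hS₂m
  have D₄ := stmt10_decomp μ X Y hXm hYm Z hZ hindep (fun _ => (1:ℝ)) measurable_const honeint S₂ hS₂m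
  -- rewrite the decompositions in terms of g, F, h, q
  have e₁g : ∀ y : ℝ,
      (∫ ω, I ω * S₁.indicator (fun _ => (1:ℝ)) (X ω, y) * X ω ∂μ) = g y := by
    intro y
    show _ = ∫ ω in Z ∩ {ω | X ω ≤ y}, X ω ∂μ
    rw [← integral_indicator (hm₁ y)]
    exact integral_congr_ae (Filter.Eventually.of_forall fun ω => hpt₁ X y ω)
  have e₁F : ∀ y : ℝ,
      (∫ ω, I ω * S₁.indicator (fun _ => (1:ℝ)) (X ω, y) * 1 ∂μ) = F y := by
    intro y
    have : (∫ ω, I ω * S₁.indicator (fun _ => (1:ℝ)) (X ω, y) * 1 ∂μ)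
        = ∫ ω, (Z ∩ {ω | X ω ≤ y}).indicator (fun _ => (1:ℝ)) ω ∂μ :=
      integral_congr_ae (Filter.Eventually.of_forall fun ω => hpt₁ (fun _ => 1) y ω)
    show _ = (μ (Z ∩ {ω | X ω ≤ y})).toReal
    rw [this, integral_indicator (hm₁ y), setIntegral_const, smul_eq_mul, mul_one, measureReal_def]
  have e₂h : ∀ y : ℝ,
      (∫ ω, I ω * S₂.indicator (fun _ => (1:ℝ)) (X ω, y) * X ω ∂μ) = h y := by
    intro y
    show _ = ∫ ω in Z ∩ {ω | y ≤ X ω}, X ω ∂μ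
    rw [← integral_indicator (hm₂ y)]
    exact integral_congr_ae (Filter.Eventually.of_forall fun ω => hpt₂ X y ω)
  have e₂q : ∀ y : ℝ,
      (∫ ω, I ω * S₂.indicator (fun _ => (1:ℝ)) (X ω, y) * 1 ∂μ) = q y := by
    intro y
    have : (∫ ω, I ω * S₂.indicator (fun _ => (1:ℝ)) (X ω, y) * 1 ∂μ)
        = ∫ ω, (Z ∩ {ω | y ≤ X ω}).indicator (fun _ => (1:ℝ)) ω ∂μ :=
      integral_congr_ae (Filter.Eventually.of_forall fun ω => hpt₂ (fun _ => 1) y ω)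
    show _ = (μ (Z ∩ {ω | y ≤ X ω})).toReal
    rw [this, integral_indicator (hm₂ y), setIntegral_const, smul_eq_mul, mul_one, measureReal_def]
  -- the four main identities
  have hG : (∫ ω in Z ∩ {ω | X ω ≤ Y ω}, X ω ∂μ) = ∫ y, g y ∂ν := by
    have := D₁.1
    rw [show (∫ ω, I ω * S₁.indicator (fun _ => (1:ℝ)) (X ω, Y ω) * X ω ∂μ)
        = ∫ ω in Z ∩ {ω | X ω ≤ Y ω}, X ω ∂μ by
      rw [← integral_indicator hmY₁]
      exact integral_congr_ae (Filter.Eventually.of_forall fun ω => hptY₁ X ω)] at this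
    rw [this]
    exact integral_congr_ae (Filter.Eventually.of_forall fun y => e₁g y)
  have hgint : Integrable g ν := D₁.2.congr (Filter.Eventually.of_forall fun y => e₁g y)
  have hA : (μ (Z ∩ {ω | X ω ≤ Y ω})).toReal = ∫ y, F y ∂ν := by
    have := D₂.1
    rw [show (∫ ω, I ω * S₁.indicator (fun _ => (1:ℝ)) (X ω, Y ω) * 1 ∂μ)
        = (μ (Z ∩ {ω | X ω ≤ Y ω})).toReal by
      rw [show (∫ ω, I ω * S₁.indicator (fun _ => (1:ℝ)) (X ω, Y ω) * 1 ∂μ)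
          = ∫ ω, (Z ∩ {ω | X ω ≤ Y ω}).indicator (fun _ => (1:ℝ)) ω ∂μ from
        integral_congr_ae (Filter.Eventually.of_forall fun ω => hptY₁ (fun _ => 1) ω),
        integral_indicator hmY₁, setIntegral_const, smul_eq_mul, mul_one, measureReal_def]] at this
    rw [this]
    exact integral_congr_ae (Filter.Eventually.of_forall fun y => e₁F y)
  have hFint : Integrable F ν := D₂.2.congr (Filter.Eventually.of_forall fun y => e₁F y)
  have hH : (∫ ω in Z ∩ {ω | Y ω ≤ X ω}, X ω ∂μ) = ∫ y, h y ∂ν := by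
    have := D₃.1
    rw [show (∫ ω, I ω * S₂.indicator (fun _ => (1:ℝ)) (X ω, Y ω) * X ω ∂μ)
        = ∫ ω in Z ∩ {ω | Y ω ≤ X ω}, X ω ∂μ by
      rw [← integral_indicator hmY₂]
      exact integral_congr_ae (Filter.Eventually.of_forall fun ω => hptY₂ X ω)] at this
    rw [this]
    exact integral_congr_ae (Filter.Eventually.of_forall fun y => e₂h y)
  have hhint : Integrable h ν := D₃.2.congr (Filter.Eventually.of_forall fun y => e₂h y)
  have hB : (μ (Z ∩ {ω | Y ω ≤ X ω})).toReal = ∫ y, q y ∂ν := by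
    have := D₄.1
    rw [show (∫ ω, I ω * S₂.indicator (fun _ => (1:ℝ)) (X ω, Y ω) * 1 ∂μ)
        = (μ (Z ∩ {ω | Y ω ≤ X ω})).toReal by
      rw [show (∫ ω, I ω * S₂.indicator (fun _ => (1:ℝ)) (X ω, Y ω) * 1 ∂μ)
          = ∫ ω, (Z ∩ {ω | Y ω ≤ X ω}).indicator (fun _ => (1:ℝ)) ω ∂μ from
        integral_congr_ae (Filter.Eventually.of_forall fun ω => hptY₂ (fun _ => 1) ω),
        integral_indicator hmY₂, setIntegral_const, smul_eq_mul, mul_one, measureReal_def]] at this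
    rw [this]
    exact integral_congr_ae (Filter.Eventually.of_forall fun y => e₂q y)
  have hqint : Integrable q ν := D₄.2.congr (Filter.Eventually.of_forall fun y => e₂q y)
  -- ν-a.e. y, the level set {X = y} is μ-null
  have hae : ∀ᵐ y ∂ν, μ {ω | X ω = y} = 0 := by
    have hctble : Set.Countable {t : ℝ | 0 < μ {ω | X ω = t}} :=
      Measure.countable_meas_level_set_pos hXm
    have habs : μ.map Y ≪ (volume : Measure ℝ) := HasPDF.absolutelyContinuous
    have h0 : ν {t : ℝ | 0 < μ {ω | X ω = t}} = 0 := by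
      rw [hν]; exact habs (hctble.measure_zero volume)
    rw [ae_iff]
    refine measure_mono_null (fun y hy => ?_) h0
    simp only [Set.mem_setOf_eq] at hy ⊢
    exact pos_iff_ne_zero.mpr hy
  set E : ℝ := ∫ ω in Z, X ω ∂μ with hE
  set P : ℝ := (μ Z).toReal with hP
  -- a.e. splitting relations
  have haeF : ∀ᵐ y ∂ν, F y + q y = P := by
    filter_upwards [hae] with y hy
    have hub : Z ∩ {ω | X ω ≤ y} ∪ Z ∩ {ω | y ≤ X ω} = Z := by
      rw [← Set.inter_union_distrib_left]
      have : {ω | X ω ≤ y} ∪ {ω | y ≤ X ω} = Set.univ := by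
        ext ω; simp [le_total]
      rw [this, Set.inter_univ]
    have hib : μ (Z ∩ {ω | X ω ≤ y} ∩ (Z ∩ {ω | y ≤ X ω})) = 0 := by
      refine measure_mono_null (fun ω hω => ?_) hy
      exact le_antisymm hω.1.2 hω.2.2
    have := measure_union_add_inter (μ := μ) (Z ∩ {ω | X ω ≤ y}) (hm₂ y)
    rw [hub, hib, add_zero] at this
    show (μ (Z ∩ {ω | X ω ≤ y})).toReal + (μ (Z ∩ {ω | y ≤ X ω})).toReal = (μ Z).toReal
    rw [← ENNReal.toReal_add (measure_ne_top _ _) (measure_ne_top _ _), this]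
  have haeg : ∀ᵐ y ∂ν, g y + h y = E := by
    filter_upwards [hae] with y hy
    have hset : (Z ∩ {ω | y ≤ X ω} : Set Ω) =ᵐ[μ] (Z ∩ {ω | y < X ω} : Set Ω) := by
      rw [ae_eq_set]
      constructor
      · refine measure_mono_null (fun ω hω => ?_) hy
        have := hω.1.2
        have h2 : ¬ y < X ω := fun hc => hω.2 ⟨hω.1.1, hc⟩
        exact le_antisymm (not_lt.mp h2) this
      · refine measure_mono_null (fun ω hω => ?_) hy
        have h2 : y < X ω := hω.1.2
        exact absurd (⟨hω.1.1, (le_of_lt h2 : y ≤ X ω)⟩ : ω ∈ Z ∩ {ω | y ≤ X ω}) hω.2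
    have hdisj : Disjoint (Z ∩ {ω | X ω ≤ y}) (Z ∩ {ω | y < X ω}) := by
      rw [Set.disjoint_left]
      rintro ω ⟨-, (h1 : X ω ≤ y)⟩ ⟨-, (h2 : y < X ω)⟩
      exact absurd h1 (not_le.2 h2)
    have hub : Z ∩ {ω | X ω ≤ y} ∪ Z ∩ {ω | y < X ω} = Z := by
      rw [← Set.inter_union_distrib_left]
      have : {ω | X ω ≤ y} ∪ {ω | y < X ω} = Set.univ := by
        ext ω; simp [le_or_gt]
      rw [this, Set.inter_univ]
    have hsplit : ∫ ω in Z, X ω ∂μ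
        = (∫ ω in Z ∩ {ω | X ω ≤ y}, X ω ∂μ) + ∫ ω in Z ∩ {ω | y < X ω}, X ω ∂μ := by
      conv_lhs => rw [← hub]
      exact setIntegral_union hdisj (hZ.inter (hXm measurableSet_Ioi))
        hXint.integrableOn hXint.integrableOn
    show (∫ ω in Z ∩ {ω | X ω ≤ y}, X ω ∂μ) + (∫ ω in Z ∩ {ω | y ≤ X ω}, X ω ∂μ)
        = ∫ ω in Z, X ω ∂μ
    rw [setIntegral_congr_set hset, hsplit]
  -- key integrated inequality : P * ∫ g ≤ E * ∫ F
  have hkey : P * ∫ y, g y ∂ν ≤ E * ∫ y, F y ∂ν := by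
    rw [← integral_const_mul, ← integral_const_mul]
    refine integral_mono (hgint.const_mul P) (hFint.const_mul E) fun y => ?_
    show P * g y ≤ E * F y
    exact stmt10_pointwise μ X hXint hXm Z hZ y
  -- integrate the a.e. relations
  have hsumF : (∫ y, F y ∂ν) + ∫ y, q y ∂ν = P := by
    rw [← integral_add hFint hqint]
    rw [integral_congr_ae haeF]
    simp
  have hsumg : (∫ y, g y ∂ν) + ∫ y, h y ∂ν = E := by
    rw [← integral_add hgint hhint]
    rw [integral_congr_ae haeg]
    simp
  -- final algebra
  have hApos : 0 < (μ (Z ∩ {ω | X ω ≤ Y ω})).toReal :=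
    ENNReal.toReal_pos hpos₂.ne' (measure_ne_top μ _)
  have hBpos : 0 < (μ (Z ∩ {ω | Y ω ≤ X ω})).toReal :=
    ENNReal.toReal_pos hpos₁.ne' (measure_ne_top μ _)
  rw [div_le_div_iff₀ hApos hBpos]
  rw [hG, hA, hH, hB]
  have hx1 : (∫ y, g y ∂ν) * (∫ y, q y ∂ν)
      = (∫ y, g y ∂ν) * P - (∫ y, g y ∂ν) * (∫ y, F y ∂ν) := by
    rw [← hsumF]; ring
  have hx2 : (∫ y, h y ∂ν) * (∫ y, F y ∂ν)
      = E * (∫ y, F y ∂ν) - (∫ y, g y ∂ν) * (∫ y, F y ∂ν) := by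
    rw [← hsumg]; ring
  linarith [hkey, hx1, hx2]
end

section
/- Suppose valuations for good g are i.i.d. uniform on [0, M]. If e_i ≤ e_j, then Pr(g ∈ A_i) ≥ (e_j/e_i)·Pr(g ∈ A_j), where the good is assigned to the agent maximizing v_k(g)/e_k. -/
open MeasureTheory ProbabilityTheory
open scoped ENNReal

/-- Value of the uniform measure on `[0,M]` on `Iio c` for `0 ≤ c ≤ M`. -/
lemma nu_Iio_aux {M c : ℝ} (h0 : 0 ≤ c) (hcM : c ≤ M) :
    ((ENNReal.ofReal M)⁻¹ • (volume.restrict (Set.Icc (0:ℝ) M))) (Set.Iio c)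
      = (ENNReal.ofReal M)⁻¹ * ENNReal.ofReal c := by
  rw [Measure.smul_apply, smul_eq_mul, Measure.restrict_apply measurableSet_Iio]
  congr 1
  refine le_antisymm ?_ ?_
  · calc volume (Set.Iio c ∩ Set.Icc 0 M) ≤ volume (Set.Icc 0 c) := by
          apply measure_mono
          rintro t ⟨ht1, ht2, _⟩
          exact ⟨ht2, ht1.le⟩
    _ = ENNReal.ofReal c := by rw [Real.volume_Icc, sub_zero]
  · calc ENNReal.ofReal c = volume (Set.Ico 0 c) := by rw [Real.volume_Ico, sub_zero]
    _ ≤ volume (Set.Iio c ∩ Set.Icc 0 M) := by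
          apply measure_mono
          rintro t ⟨ht1, ht2⟩
          exact ⟨ht2, ht1, ht2.le.trans hcM⟩

theorem stmt12 {Ω : Type*} [MeasurableSpace Ω] (μ : Measure Ω) [IsProbabilityMeasure μ]
    (n : ℕ) (V : Fin n → Ω → ℝ) (hmeas : ∀ k, Measurable (V k))
    -- the valuations are i.i.d. uniform on [0, M]
    (hindep : iIndepFun V μ)
    (M : ℝ) (hM : 0 < M)
    (hunif : ∀ k, μ.map (V k)
      = (ENNReal.ofReal M)⁻¹ • (volume.restrict (Set.Icc (0 : ℝ) M)))
    (e : Fin n → ℝ) (he : ∀ k, 0 < e k)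
    (i j : Fin n) (hij : e i ≤ e j) :
    -- Pr(good goes to i) ≥ (e_j/e_i) · Pr(good goes to j)
    (e j / e i) * (μ {ω | ∀ k, k ≠ j → V k ω / e k < V j ω / e j}).toReal
      ≤ (μ {ω | ∀ k, k ≠ i → V k ω / e k < V i ω / e i}).toReal := by
  obtain _ | n := n
  · exact i.elim0
  rcases eq_or_ne i j with rfl | hne
  · rw [div_self (he i).ne', one_mul]
  set ν : Measure ℝ := (ENNReal.ofReal M)⁻¹ • (volume.restrict (Set.Icc (0:ℝ) M)) with hν
  have hνprob : IsProbabilityMeasure ν := by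
    constructor
    rw [hν, Measure.smul_apply, smul_eq_mul, Measure.restrict_apply MeasurableSet.univ,
      Set.univ_inter, Real.volume_Icc, sub_zero]
    exact ENNReal.inv_mul_cancel (ENNReal.ofReal_pos.mpr hM).ne' ENNReal.ofReal_ne_top
  haveI := hνprob
  -- joint law is the product of uniforms
  have hF : Measurable (fun ω (k : Fin (n+1)) => V k ω) :=
    measurable_pi_lambda _ hmeas
  have hmap : μ.map (fun ω k => V k ω) = Measure.pi (fun _ : Fin (n+1) => ν) := by
    symm
    apply Measure.pi_eq
    intro s hs
    rw [Measure.map_apply hF (MeasurableSet.univ_pi hs)]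
    have hpre : (fun ω k => V k ω) ⁻¹' (Set.pi Set.univ s) = ⋂ k ∈ Finset.univ, V k ⁻¹' s k := by
      ext ω; simp [Set.mem_univ_pi]
    rw [hpre, hindep.measure_inter_preimage_eq_mul Finset.univ (fun k _ => hs k)]
    refine Finset.prod_congr rfl fun k _ => ?_
    rw [← Measure.map_apply (hmeas k) (hs k), hunif k]
  -- measurability of the winner events in product space
  have hBmeas : ∀ k : Fin (n+1),
      MeasurableSet {x : Fin (n+1) → ℝ | ∀ m, m ≠ k → x m / e m < x k / e k} := by
    intro k
    have hrw : {x : Fin (n+1) → ℝ | ∀ m, m ≠ k → x m / e m < x k / e k}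
        = ⋂ m, {x : Fin (n+1) → ℝ | m ≠ k → x m / e m < x k / e k} := by
      ext x; simp [Set.mem_iInter]
    rw [hrw]
    refine MeasurableSet.iInter fun m => ?_
    by_cases hmk : m = k
    · subst hmk; simp
    · have hrw2 : {x : Fin (n+1) → ℝ | m ≠ k → x m / e m < x k / e k}
          = {x : Fin (n+1) → ℝ | x m / e m < x k / e k} := by
        ext x; simp [hmk]
      rw [hrw2]
      exact measurableSet_lt ((measurable_pi_apply m).div_const _)
        ((measurable_pi_apply k).div_const _)
  -- transfer events to the product space
  have hA : ∀ k : Fin (n+1), μ {ω | ∀ m, m ≠ k → V m ω / e m < V k ω / e k}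
      = Measure.pi (fun _ : Fin (n+1) => ν) {x | ∀ m, m ≠ k → x m / e m < x k / e k} := by
    intro k
    rw [← hmap, Measure.map_apply hF (hBmeas k)]
    rfl
  -- split off coordinate k : the measure as a 1-dim integral of a product of CDFs
  have hsplit : ∀ k : Fin (n+1),
      Measure.pi (fun _ : Fin (n+1) => ν) {x | ∀ m, m ≠ k → x m / e m < x k / e k}
      = ∫⁻ t, ∏ m : Fin n, ν (Set.Iio (t / e k * e (k.succAbove m))) ∂ν := by
    intro k
    have hmp := measurePreserving_piFinSuccAbove (fun _ : Fin (n+1) => ν) k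
    set S : Set (ℝ × (Fin n → ℝ)) := {p | ∀ m, p.2 m / e (k.succAbove m) < p.1 / e k} with hS
    have hSmeas : MeasurableSet S := by
      have hrw : S = ⋂ m, {p : ℝ × (Fin n → ℝ) | p.2 m / e (k.succAbove m) < p.1 / e k} := by
        ext p; simp [hS, Set.mem_iInter]
      rw [hrw]
      exact MeasurableSet.iInter fun m => measurableSet_lt
        (((measurable_pi_apply m).comp measurable_snd).div_const _)
        (measurable_fst.div_const _)
    have hpre : {x : Fin (n+1) → ℝ | ∀ m, m ≠ k → x m / e m < x k / e k}
        = (MeasurableEquiv.piFinSuccAbove (fun _ => ℝ) k) ⁻¹' S := by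
      ext x
      simp only [hS, Set.mem_setOf_eq, Set.mem_preimage, MeasurableEquiv.piFinSuccAbove,
        MeasurableEquiv.coe_mk, Fin.insertNthEquiv, Equiv.coe_fn_symm_mk, Fin.removeNth]
      constructor
      · intro h m
        exact h (k.succAbove m) (Fin.succAbove_ne k m)
      · intro h m hm
        obtain ⟨l, rfl⟩ := Fin.exists_succAbove_eq hm
        exact h l
    rw [hpre, hmp.measure_preimage_equiv S, Measure.prod_apply hSmeas]
    refine lintegral_congr fun t => ?_
    have hsec : (Prod.mk t ⁻¹' S)
        = Set.pi Set.univ (fun m => Set.Iio (t / e k * e (k.succAbove m))) := by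
      ext y
      simp only [hS, Set.mem_preimage, Set.mem_setOf_eq, Set.mem_univ_pi, Set.mem_Iio]
      exact ⟨fun h m => (div_lt_iff₀ (he _)).mp (h m), fun h m => (div_lt_iff₀ (he _)).mpr (h m)⟩
    rw [hsec, Measure.pi_pi]
  -- the key inequality in ℝ≥0∞
  have key : ENNReal.ofReal (e j / e i)
        * Measure.pi (fun _ : Fin (n+1) => ν) {x | ∀ m, m ≠ j → x m / e m < x j / e j}
      ≤ Measure.pi (fun _ : Fin (n+1) => ν) {x | ∀ m, m ≠ i → x m / e m < x i / e i} := by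
    rw [hsplit i, hsplit j, ← lintegral_const_mul' _ _ ENNReal.ofReal_ne_top]
    refine lintegral_mono_ae ?_
    have hmem : ∀ᵐ t ∂ν, t ∈ Set.Icc (0:ℝ) M := by
      rw [hν]
      exact Measure.ae_smul_measure (ae_restrict_mem measurableSet_Icc) _
    filter_upwards [hmem] with t ht
    obtain ⟨ht0, htM⟩ := ht
    -- rewrite both products as full products with a trivial factor
    have hconv : ∀ k : Fin (n+1),
        (∏ m : Fin n, ν (Set.Iio (t / e k * e (k.succAbove m))))
        = ∏ l : Fin (n+1), (if l = k then 1 else ν (Set.Iio (t / e k * e l))) := by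
      intro k
      rw [Fin.prod_univ_succAbove (fun l => if l = k then 1 else ν (Set.Iio (t / e k * e l))) k,
        if_pos rfl, one_mul]
      exact (Finset.prod_congr rfl fun m _ => by rw [if_neg (Fin.succAbove_ne k m)]).symm
    rw [hconv i, hconv j]
    set f : Fin (n+1) → ℝ≥0∞ := fun l => if l = i then 1 else ν (Set.Iio (t / e i * e l)) with hf
    set g : Fin (n+1) → ℝ≥0∞ := fun l => if l = j then 1 else ν (Set.Iio (t / e j * e l)) with hg
    have hswap : (∏ l : Fin (n+1), g l) = ∏ l, g (Equiv.swap i j l) :=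
      (Equiv.prod_comp (Equiv.swap i j) g).symm
    rw [hswap, ← Finset.mul_prod_erase Finset.univ f (Finset.mem_univ j),
      ← Finset.mul_prod_erase Finset.univ (fun l => g (Equiv.swap i j l)) (Finset.mem_univ j),
      ← mul_assoc]
    have hgj : g (Equiv.swap i j j) = ν (Set.Iio (t / e j * e i)) := by
      rw [Equiv.swap_apply_right, hg]
      simp [hne]
    have hfj : f j = ν (Set.Iio (t / e i * e j)) := by
      rw [hf]; simp [hne.symm]
    refine mul_le_mul' ?_ ?_
    · -- key one-dimensional CDF inequality
      rw [hgj, hfj]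
      have hle1 : t / e j * e i ≤ M := by
        calc t / e j * e i ≤ t / e j * e j :=
              mul_le_mul_of_nonneg_left hij (div_nonneg ht0 (he j).le)
        _ = t := div_mul_cancel₀ t (he j).ne'
        _ ≤ M := htM
      rw [nu_Iio_aux (mul_nonneg (div_nonneg ht0 (he j).le) (he i).le) hle1]
      have harr : ENNReal.ofReal (e j / e i)
            * ((ENNReal.ofReal M)⁻¹ * ENNReal.ofReal (t / e j * e i))
          = (ENNReal.ofReal M)⁻¹ * ENNReal.ofReal t := by
        rw [← mul_assoc, mul_comm (ENNReal.ofReal (e j / e i)), mul_assoc,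
          ← ENNReal.ofReal_mul (div_nonneg (he j).le (he i).le)]
        congr 2
        have h1 : e i ≠ 0 := (he i).ne'
        have h2 : e j ≠ 0 := (he j).ne'
        field_simp
      rw [harr, ← nu_Iio_aux ht0 htM]
      apply measure_mono
      apply Set.Iio_subset_Iio
      calc t = t / e i * e i := (div_mul_cancel₀ t (he i).ne').symm
      _ ≤ t / e i * e j := mul_le_mul_of_nonneg_left hij (div_nonneg ht0 (he i).le)
    · refine Finset.prod_le_prod' fun l hl => ?_
      have hlj : l ≠ j := Finset.ne_of_mem_erase hl
      by_cases hli : l = i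
      · rw [hli, Equiv.swap_apply_left]
        simp [hf, hg]
      · rw [Equiv.swap_apply_of_ne_of_ne hli hlj]
        simp only [hf, hg, if_neg hli, if_neg hlj]
        apply measure_mono
        apply Set.Iio_subset_Iio
        have : t / e j ≤ t / e i := by
          apply div_le_div_of_nonneg_left ht0 (he i) hij
        exact mul_le_mul_of_nonneg_right this (he l).le
  -- conclude
  rw [hA i, hA j]
  have hfin : Measure.pi (fun _ : Fin (n+1) => ν)
      {x | ∀ m, m ≠ i → x m / e m < x i / e i} ≠ ⊤ := measure_ne_top _ _
  calc (e j / e i) * (Measure.pi (fun _ : Fin (n+1) => ν)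
        {x | ∀ m, m ≠ j → x m / e m < x j / e j}).toReal
      = (ENNReal.ofReal (e j / e i) * Measure.pi (fun _ : Fin (n+1) => ν)
        {x | ∀ m, m ≠ j → x m / e m < x j / e j}).toReal := by
        rw [ENNReal.toReal_mul, ENNReal.toReal_ofReal (div_nonneg (he j).le (he i).le)]
  _ ≤ _ := ENNReal.toReal_mono hfin key
end

section
/- Suppose valuations for good g are independent uniform on [0, M_g]. Then for any agent j, Pr(g ∈ A_j) ≤ (∏_{k=1}^n e_k)/(n · e_j^n), where the good goes to the agent maximizing v_k(g)/e_k. -/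
open MeasureTheory ProbabilityTheory Set

theorem stmt13 {Ω : Type*} [MeasurableSpace Ω] (μ : Measure Ω) [IsProbabilityMeasure μ]
    (n : ℕ) (V : Fin n → Ω → ℝ) (hmeas : ∀ k, Measurable (V k))
    -- the valuations are independent uniform on [0, M]
    (hindep : iIndepFun V μ)
    (M : ℝ) (hM : 0 < M)
    (hunif : ∀ k, μ.map (V k)
      = (ENNReal.ofReal M)⁻¹ • (volume.restrict (Set.Icc (0 : ℝ) M)))
    (e : Fin n → ℝ) (he : ∀ k, 0 < e k)
    (j : Fin n) :
    (μ {ω | ∀ k, k ≠ j → V k ω / e k < V j ω / e j}).toReal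
      ≤ (∏ k, e k) / (n * e j ^ n) := by
  classical
  have hn : 0 < n := j.pos
  obtain ⟨m, rfl⟩ : ∃ m, n = m + 1 := ⟨n - 1, (Nat.succ_pred_eq_of_pos hn).symm⟩
  set s : Finset (Fin (m + 1)) := {j}ᶜ with hs_def
  have hcard : s.card = m := by
    simp [hs_def, Finset.card_compl]
  set c : Fin (m + 1) → ℝ := fun k => e k / e j with hc_def
  have hc_pos : ∀ k, 0 < c k := fun k => div_pos (he k) (he j)
  set η : Measure ℝ := (ENNReal.ofReal M)⁻¹ • (volume.restrict (Set.Icc (0 : ℝ) M)) with hη_def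
  -- bound on the CDF
  have hG : ∀ t : ℝ, η (Iio t) ≤ ENNReal.ofReal t / ENNReal.ofReal M := by
    intro t
    have h1 : (volume.restrict (Set.Icc (0 : ℝ) M)) (Iio t) ≤ ENNReal.ofReal t := by
      rw [Measure.restrict_apply measurableSet_Iio]
      calc volume (Iio t ∩ Icc 0 M) ≤ volume (Ico 0 t) := by
            apply measure_mono
            rintro x ⟨hx1, hx2, _⟩
            exact ⟨hx2, hx1⟩
        _ = ENNReal.ofReal t := by simp
    rw [hη_def, Measure.smul_apply, smul_eq_mul, div_eq_mul_inv, mul_comm]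
    exact mul_le_mul_left h1 _
  -- the tuple of other valuations
  set Y : Ω → (s → ℝ) := fun ω i => V i ω with hY_def
  have hYmeas : Measurable Y := measurable_pi_lambda _ fun i => hmeas i
  -- independence of V j and Y
  have hI : IndepFun (V j) Y μ := by
    have h1 := hindep.indepFun_finset {j} s (by simp [hs_def]) hmeas
    exact h1.comp (show Measurable fun p : (({j} : Finset (Fin (m+1))) → ℝ) =>
      p ⟨j, Finset.mem_singleton_self j⟩ from measurable_pi_apply _) measurable_id
  -- the target set
  set T : Set (ℝ × (s → ℝ)) := {p | ∀ i : s, p.2 i < c i * p.1} with hT_def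
  have hTmeas : MeasurableSet T := by
    have : T = ⋂ i : s, {p : ℝ × (s → ℝ) | p.2 i < c i * p.1} := by
      ext p; simp [hT_def]
    rw [this]
    exact MeasurableSet.iInter fun i =>
      measurableSet_lt (measurable_snd.eval)
        (measurable_fst.const_mul _)
  -- rewrite the event
  have hE : {ω | ∀ k, k ≠ j → V k ω / e k < V j ω / e j}
      = (fun ω => (V j ω, Y ω)) ⁻¹' T := by
    ext ω
    simp only [hT_def, mem_setOf_eq, mem_preimage, hY_def]
    constructor
    · rintro h ⟨i, hi⟩
      have hij : i ≠ j := by simpa [hs_def] using hi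
      have := h i hij
      rw [div_lt_div_iff₀ (he i) (he j)] at this
      rw [hc_def]
      rw [div_mul_eq_mul_div, lt_div_iff₀ (he j)]
      linarith [this]
    · intro h k hk
      have hks : k ∈ s := by simp [hs_def, hk]
      have := h ⟨k, hks⟩
      rw [hc_def] at this
      rw [div_mul_eq_mul_div, lt_div_iff₀ (he j)] at this
      rw [div_lt_div_iff₀ (he k) (he j)]
      linarith [this]
  -- pass to the product measure
  haveI : IsProbabilityMeasure (μ.map Y) := Measure.isProbabilityMeasure_map hYmeas.aemeasurable
  haveI : IsProbabilityMeasure (μ.map (V j)) :=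
    Measure.isProbabilityMeasure_map (hmeas j).aemeasurable
  have hmap : μ {ω | ∀ k, k ≠ j → V k ω / e k < V j ω / e j}
      = ∫⁻ t, (μ.map Y) (Prod.mk t ⁻¹' T) ∂(μ.map (V j)) := by
    rw [hE, ← Measure.map_apply ((hmeas j).prodMk hYmeas) hTmeas,
      (indepFun_iff_map_prod_eq_prod_map_map (hmeas j).aemeasurable
        hYmeas.aemeasurable).mp hI,
      Measure.prod_apply hTmeas]
  -- compute the slice measure
  have hslice : ∀ t : ℝ, (μ.map Y) (Prod.mk t ⁻¹' T)
      = ∏ i ∈ s, η (Iio (c i * t)) := by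
    intro t
    have hpre : Y ⁻¹' (Prod.mk t ⁻¹' T) = ⋂ i ∈ s, V i ⁻¹' Iio (c i * t) := by
      ext ω
      simp only [hT_def, mem_preimage, mem_setOf_eq, mem_iInter, hY_def, mem_Iio]
      exact ⟨fun h i hi => h ⟨i, hi⟩, fun h i => h i i.2⟩
    rw [Measure.map_apply hYmeas (measurable_prodMk_left hTmeas), hpre,
      hindep.meas_biInter (fun i _ => ⟨Iio (c i * t), measurableSet_Iio, rfl⟩)]
    refine Finset.prod_congr rfl fun i _ => ?_
    rw [← Measure.map_apply (hmeas i) measurableSet_Iio, hunif i]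
  -- bound the integrand
  set K : ℝ := ∏ i ∈ s, (c i / M) with hK_def
  have hK_nonneg : 0 ≤ K := Finset.prod_nonneg fun i _ => div_nonneg (hc_pos i).le hM.le
  have hbound : μ {ω | ∀ k, k ≠ j → V k ω / e k < V j ω / e j}
      ≤ (ENNReal.ofReal M)⁻¹ * ∫⁻ t in Icc (0:ℝ) M, ENNReal.ofReal (K * t ^ m) := by
    rw [hmap, hunif j]
    rw [lintegral_smul_measure]
    apply mul_le_mul_right
    calc ∫⁻ t in Icc (0:ℝ) M, (μ.map Y) (Prod.mk t ⁻¹' T)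
        ≤ ∫⁻ t in Icc (0:ℝ) M, ∏ i ∈ s, (ENNReal.ofReal (c i * t) / ENNReal.ofReal M) := by
          apply lintegral_mono
          intro t
          dsimp only
          rw [hslice t]
          exact Finset.prod_le_prod' fun i _ => hG _
      _ = ∫⁻ t in Icc (0:ℝ) M, ENNReal.ofReal (K * t ^ m) := by
          apply setLIntegral_congr_fun measurableSet_Icc
          intro t ht
          dsimp only
          have ht0 : 0 ≤ t := ht.1
          have h1 : ∀ i ∈ s, ENNReal.ofReal (c i * t) / ENNReal.ofReal M
              = ENNReal.ofReal (c i / M * t) := by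
            intro i _
            rw [← ENNReal.ofReal_div_of_pos hM]
            ring_nf
          rw [Finset.prod_congr rfl h1, ← ENNReal.ofReal_prod_of_nonneg
            (fun i _ => mul_nonneg (div_nonneg (hc_pos i).le hM.le) ht0)]
          congr 1
          rw [Finset.prod_mul_distrib, Finset.prod_const, hcard, hK_def]
  -- compute the integral
  have hint : ∫⁻ t in Icc (0:ℝ) M, ENNReal.ofReal (K * t ^ m)
      = ENNReal.ofReal (K * (M ^ (m + 1) / (m + 1))) := by
    rw [← ofReal_integral_eq_lintegral_ofReal]
    · congr 1
      rw [MeasureTheory.integral_Icc_eq_integral_Ioc,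
        ← intervalIntegral.integral_of_le hM.le]
      rw [intervalIntegral.integral_const_mul, integral_pow]
      congr 1
      simp
    · exact (continuous_const.mul (continuous_pow m)).integrableOn_Icc
    · filter_upwards [ae_restrict_mem measurableSet_Icc] with t ht
      have := ht.1
      positivity
  -- final bound
  have hfinal : μ {ω | ∀ k, k ≠ j → V k ω / e k < V j ω / e j}
      ≤ ENNReal.ofReal (K * (M ^ (m + 1) / (m + 1)) / M) := by
    refine hbound.trans (le_of_eq ?_)
    rw [hint, ENNReal.ofReal_div_of_pos hM, ENNReal.div_eq_inv_mul]
  have hne : ENNReal.ofReal (K * (M ^ (m + 1) / (m + 1)) / M) ≠ ⊤ := ENNReal.ofReal_ne_top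
  refine (ENNReal.toReal_mono hne hfinal).trans ?_
  rw [ENNReal.toReal_ofReal (by positivity)]
  -- real arithmetic
  have hprod : (∏ k, e k) = e j * ∏ i ∈ s, e i := by
    rw [← Finset.prod_mul_prod_compl {j} e, Finset.prod_singleton]
  have hP : 0 < ∏ i ∈ s, e i := Finset.prod_pos fun i _ => he i
  have hKval : K = (∏ i ∈ s, e i) / (e j ^ m * M ^ m) := by
    have h1 : ∀ i ∈ s, c i / M = e i / (e j * M) := fun i _ => by rw [hc_def]; ring
    rw [hK_def, Finset.prod_congr rfl h1, Finset.prod_div_distrib, Finset.prod_const,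
      hcard, mul_pow]
  have hej := he j
  refine le_of_eq ?_
  rw [hKval, hprod]
  push_cast
  field_simp
  ring
end

section
/- Consider the random process where at each step a uniformly random k-subset of the n agents pools and optimally redistributes their goods according to u_i-maximization. For any initial allocation, the probability that after t steps the allocation maximizes ∑_i u_i(A_i) is at least 1 − m·(1 − (k²−k)/(n²−n))^t, assuming each good g has a unique agent maximizing u_i(g). -/
open MeasureTheory ProbabilityTheory Finset

lemma stmt15_card_all (n k : ℕ) :
    ((Finset.univ : Finset (Finset (Fin n))).filter (fun s => s.card = k)).card
      = n.choose k := by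
  have h : (Finset.univ : Finset (Finset (Fin n))).filter (fun s => s.card = k)
      = Finset.powersetCard k Finset.univ := by
    ext s; simp [Finset.mem_powersetCard_univ]
  rw [h, Finset.card_powersetCard, Finset.card_univ, Fintype.card_fin]

lemma stmt15_card_pair {n k : ℕ} (hk2 : 2 ≤ k) (a b : Fin n) (hab : a ≠ b) :
    ((Finset.univ : Finset (Finset (Fin n))).filter
      (fun s => s.card = k ∧ a ∈ s ∧ b ∈ s)).card = (n - 2).choose (k - 2) := by
  classical
  have hcard : (((Finset.univ : Finset (Fin n)).erase a).erase b).card = n - 2 := by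
    have hb : b ∈ (Finset.univ : Finset (Fin n)).erase a :=
      Finset.mem_erase.2 ⟨hab.symm, Finset.mem_univ b⟩
    rw [Finset.card_erase_of_mem hb, Finset.card_erase_of_mem (Finset.mem_univ a),
      Finset.card_univ, Fintype.card_fin]
    omega
  have key : ((Finset.univ : Finset (Finset (Fin n))).filter
      (fun s => s.card = k ∧ a ∈ s ∧ b ∈ s)).card
      = (Finset.powersetCard (k-2) (((Finset.univ : Finset (Fin n)).erase a).erase b)).card := by
    refine Finset.card_bij' (fun s _ => (s.erase a).erase b)
      (fun s _ => insert a (insert b s)) ?_ ?_ ?_ ?_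
    · intro s hs
      simp only [Finset.mem_filter, Finset.mem_univ, true_and] at hs
      obtain ⟨hc, ha, hb⟩ := hs
      rw [Finset.mem_powersetCard]
      constructor
      · exact Finset.erase_subset_erase b (Finset.erase_subset_erase a (Finset.subset_univ s))
      · rw [Finset.card_erase_of_mem (Finset.mem_erase.2 ⟨hab.symm, hb⟩),
          Finset.card_erase_of_mem ha, hc]
        omega
    · intro s hs
      rw [Finset.mem_powersetCard] at hs
      obtain ⟨hsub, hc⟩ := hs
      have ha : a ∉ s := fun h => by
        have := hsub h; simp [Finset.mem_erase] at this
      have hb : b ∉ s := fun h => by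
        have := hsub h; simp [Finset.mem_erase] at this
      simp only [Finset.mem_filter, Finset.mem_univ, true_and]
      refine ⟨?_, Finset.mem_insert_self _ _, Finset.mem_insert_of_mem (Finset.mem_insert_self _ _)⟩
      rw [Finset.card_insert_of_notMem (by simp [ha, hab]),
        Finset.card_insert_of_notMem hb, hc]
      omega
    · intro s hs
      simp only [Finset.mem_filter, Finset.mem_univ, true_and] at hs
      obtain ⟨hc, ha, hb⟩ := hs
      rw [Finset.insert_erase (Finset.mem_erase.2 ⟨hab.symm, hb⟩), Finset.insert_erase ha]
    · intro s hs
      rw [Finset.mem_powersetCard] at hs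
      have ha : a ∉ s := fun h => by
        have := hs.1 h; simp [Finset.mem_erase] at this
      have hb : b ∉ s := fun h => by
        have := hs.1 h; simp [Finset.mem_erase] at this
      rw [Finset.erase_insert (by simp [ha, hab]), Finset.erase_insert hb]
  rw [key, Finset.card_powersetCard, hcard]

lemma stmt15_choose (n k : ℕ) (hk2 : 2 ≤ k) (hkn : k ≤ n) :
    (n - 2).choose (k - 2) * (n ^ 2 - n) = n.choose k * (k ^ 2 - k) := by
  obtain ⟨k', rfl⟩ : ∃ k', k = k' + 2 := ⟨k - 2, by omega⟩
  obtain ⟨n', rfl⟩ : ∃ n', n = n' + 2 := ⟨n - 2, by omega⟩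
  simp only [Nat.add_sub_cancel]
  have e1 : (n' + 2) ^ 2 - (n' + 2) = (n' + 2) * (n' + 1) := by
    have : (n' + 2) ^ 2 = (n' + 2) * (n' + 1) + (n' + 2) := by ring
    omega
  have e2 : (k' + 2) ^ 2 - (k' + 2) = (k' + 2) * (k' + 1) := by
    have : (k' + 2) ^ 2 = (k' + 2) * (k' + 1) + (k' + 2) := by ring
    omega
  rw [e1, e2]
  have h1 := Nat.add_one_mul_choose_eq n' k'
  have h2 := Nat.add_one_mul_choose_eq (n' + 1) (k' + 1)
  rw [show n' + 1 + 1 = n' + 2 from rfl, show k' + 1 + 1 = k' + 2 from rfl] at h2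
  calc Nat.choose n' k' * ((n' + 2) * (n' + 1))
      = (n' + 2) * ((n' + 1) * Nat.choose n' k') := by ring
    _ = (n' + 2) * (Nat.choose (n' + 1) (k' + 1) * (k' + 1)) := by rw [h1]
    _ = ((n' + 2) * Nat.choose (n' + 1) (k' + 1)) * (k' + 1) := by ring
    _ = (Nat.choose (n' + 2) (k' + 2) * (k' + 2)) * (k' + 1) := by rw [h2]
    _ = Nat.choose (n' + 2) (k' + 2) * ((k' + 2) * (k' + 1)) := by ring

lemma stmt15_unif {n k : ℕ} (hk2 : 2 ≤ k) (hkn : k ≤ n) (a b : Fin n) (hab : a ≠ b) :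
    @uniformOn (Finset (Fin n)) ⊤ {s | s.card = k} {s | a ∈ s ∧ b ∈ s}
      = ENNReal.ofReal (((k : ℝ) ^ 2 - k) / ((n : ℝ) ^ 2 - n)) := by
  classical
  letI : MeasurableSpace (Finset (Fin n)) := ⊤
  have hn2 : 2 ≤ n := hk2.trans hkn
  have hset1 : {s : Finset (Fin n) | s.card = k}
      = ↑((Finset.univ : Finset (Finset (Fin n))).filter (fun s => s.card = k)) := by
    ext s; simp
  have hset2 : {s : Finset (Fin n) | s.card = k} ∩ {s | a ∈ s ∧ b ∈ s}
      = ↑((Finset.univ : Finset (Finset (Fin n))).filter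
          (fun s => s.card = k ∧ a ∈ s ∧ b ∈ s)) := by
    ext s; simp [Set.mem_inter_iff]
  rw [uniformOn, cond_apply MeasurableSpace.measurableSet_top, hset2, hset1,
    Measure.count_apply_finset' MeasurableSpace.measurableSet_top, Measure.count_apply_finset' MeasurableSpace.measurableSet_top,
    stmt15_card_all, stmt15_card_pair hk2 a b hab]
  have hC1pos : 0 < n.choose k := Nat.choose_pos hkn
  have hnpos : (0 : ℝ) < (n : ℝ) ^ 2 - n := by
    have h2 : (2 : ℝ) ≤ (n : ℝ) := by exact_mod_cast hn2
    nlinarith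
  have hcast : ((n ^ 2 - n : ℕ) : ℝ) = (n : ℝ) ^ 2 - n := by
    have : n ≤ n ^ 2 := Nat.le_self_pow two_ne_zero n
    push_cast [this]; ring
  have hcast2 : ((k ^ 2 - k : ℕ) : ℝ) = (k : ℝ) ^ 2 - k := by
    have : k ≤ k ^ 2 := Nat.le_self_pow two_ne_zero k
    push_cast [this]; ring
  have keyR : (((n - 2).choose (k - 2) : ℝ)) * ((n : ℝ) ^ 2 - n)
      = ((n.choose k : ℝ)) * ((k : ℝ) ^ 2 - k) := by
    have := stmt15_choose n k hk2 hkn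
    rw [← hcast, ← hcast2]
    exact_mod_cast this
  have hp : ((k : ℝ) ^ 2 - k) / ((n : ℝ) ^ 2 - n)
      = (((n - 2).choose (k - 2) : ℝ)) / ((n.choose k : ℝ)) := by
    rw [div_eq_div_iff hnpos.ne' (by exact_mod_cast hC1pos.ne')]
    linear_combination -keyR
  rw [hp, ENNReal.ofReal_div_of_pos (by exact_mod_cast hC1pos),
    ENNReal.ofReal_natCast, ENNReal.ofReal_natCast, ENNReal.div_eq_inv_mul]
def stmt15_alloc {n m : ℕ} (R : Finset (Fin n) → (Fin m → Fin n) → (Fin m → Fin n))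
    (A0 : Fin m → Fin n) : ℕ → (ℕ → Finset (Fin n)) → (Fin m → Fin n)
  | 0, _ => A0
  | (t+1), f => R (f t) (stmt15_alloc R A0 t f)

lemma stmt15_alloc_congr {n m : ℕ} (R : Finset (Fin n) → (Fin m → Fin n) → (Fin m → Fin n))
    (A0 : Fin m → Fin n) {t : ℕ} {f f' : ℕ → Finset (Fin n)}
    (h : ∀ s < t, f s = f' s) :
    stmt15_alloc R A0 t f = stmt15_alloc R A0 t f' := by
  induction t with
  | zero => rfl
  | succ t ih =>
    show R (f t) _ = R (f' t) _
    rw [h t (Nat.lt_succ_self t), ih (fun s hs => h s (hs.trans (Nat.lt_succ_self t)))]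

theorem stmt15 {Ω : Type*} [MeasurableSpace Ω] (μ : Measure Ω) [IsProbabilityMeasure μ]
    (n m k : ℕ) (hk2 : 2 ≤ k) (hkn : k ≤ n)
    (v : Fin n → Fin m → ℝ) (e : Fin n → ℝ) (he : ∀ i, 0 < e i)
    (u : Fin n → Fin m → ℝ)
    (hu : ∀ i g, u i g = Real.log (v i g + e i) - Real.log (e i))
    -- each good has a unique agent maximizing u_i(g)
    (istar : Fin m → Fin n)
    (hstar : ∀ g i, i ≠ istar g → u i g < u (istar g) g)
    -- at each step an i.i.d. uniformly random k-subset of agents is chosen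
    (S : ℕ → Ω → Finset (Fin n))
    (hSmeas : ∀ t, @Measurable Ω (Finset (Fin n)) _ ⊤ (S t))
    (hSindep : iIndepFun (m := fun _ => (⊤ : MeasurableSpace (Finset (Fin n)))) S μ)
    (hSunif : ∀ t, @Measure.map Ω (Finset (Fin n)) _ ⊤ (S t) μ
      = @uniformOn (Finset (Fin n)) ⊤ {s | s.card = k})
    -- the chosen subset optimally redistributes the goods its members hold:
    -- `R s A` leaves goods held outside `s` untouched, and any good held by a
    -- member of `s` goes to a member of `s` maximizing `u · g` within `s`
    (R : Finset (Fin n) → (Fin m → Fin n) → (Fin m → Fin n))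
    (hR₁ : ∀ s A g, A g ∉ s → R s A g = A g)
    (hR₂ : ∀ s A g, A g ∈ s → R s A g ∈ s ∧ ∀ i ∈ s, u i g ≤ u (R s A g) g)
    -- the process: start anywhere, apply one random redistribution per step
    (A0 : Fin m → Fin n) (Aproc : ℕ → Ω → (Fin m → Fin n))
    (hA0 : ∀ ω, Aproc 0 ω = A0)
    (hAstep : ∀ t ω, Aproc (t + 1) ω = R (S t ω) (Aproc t ω))
    (t : ℕ) :
    1 - ENNReal.ofReal ((m : ℝ) *
        (1 - ((k : ℝ) ^ 2 - k) / ((n : ℝ) ^ 2 - n)) ^ t)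
      ≤ μ {ω | ∀ B : Fin m → Fin n,
          ∑ g, u (B g) g ≤ ∑ g, u (Aproc t ω g) g} := by
  classical
  letI : MeasurableSpace (Finset (Fin n)) := ⊤
  haveI : MeasurableSingletonClass (Finset (Fin n)) := ⟨fun _ => trivial⟩
  set p : ℝ := ((k : ℝ) ^ 2 - k) / ((n : ℝ) ^ 2 - n) with hpdef
  have hn2 : 2 ≤ n := hk2.trans hkn
  have hnR : (0 : ℝ) < (n : ℝ) ^ 2 - n := by
    have h2 : (2 : ℝ) ≤ (n : ℝ) := by exact_mod_cast hn2
    nlinarith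
  have hp0 : 0 ≤ p := by
    apply div_nonneg _ hnR.le
    have h2 : (2 : ℝ) ≤ (k : ℝ) := by exact_mod_cast hk2
    nlinarith
  have hp1 : p ≤ 1 := by
    rw [div_le_one hnR]
    have h2 : (k : ℝ) ≤ (n : ℝ) := by exact_mod_cast hkn
    have h3 : (2 : ℝ) ≤ (k : ℝ) := by exact_mod_cast hk2
    nlinarith
  have h1p0 : 0 ≤ 1 - p := by linarith
  -- R sends a good to its maximizer whenever possible
  have hRfix : ∀ s A g, (A g = istar g ∨ (A g ∈ s ∧ istar g ∈ s)) → R s A g = istar g := by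
    intro s A g h
    by_cases hm : A g ∈ s
    · obtain ⟨h1, h2⟩ := hR₂ s A g hm
      have hin : istar g ∈ s := by
        rcases h with h | h
        · rwa [← h]
        · exact h.2
      have hle := h2 (istar g) hin
      by_contra hne
      exact absurd (hstar g _ hne) (not_lt.2 hle)
    · rw [hR₁ s A g hm]
      rcases h with h | h
      · exact h
      · exact absurd h.1 hm
  -- Aproc as a function of the sets chosen so far
  have halloc : ∀ t ω, Aproc t ω = stmt15_alloc R A0 t (fun s => S s ω) := by
    intro t
    induction t with
    | zero => intro ω; rw [hA0]; rfl
    | succ t ih => intro ω; rw [hAstep, ih]; rfl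
  -- measurability of the holder of good g at time t
  have hAmeas : ∀ t g, Measurable (fun ω => Aproc t ω g) := by
    intro t
    induction t with
    | zero =>
      intro g
      have : (fun ω => Aproc 0 ω g) = fun _ => A0 g := by funext ω; rw [hA0]
      rw [this]; exact measurable_const
    | succ t ih =>
      intro g
      have h1 : Measurable (fun ω => (S t ω, fun g' => Aproc t ω g')) :=
        (hSmeas t).prodMk (measurable_pi_lambda _ ih)
      have h2 : Measurable (fun q : Finset (Fin n) × (Fin m → Fin n) => R q.1 q.2 g) :=
        measurable_of_countable _
      have : (fun ω => Aproc (t+1) ω g)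
          = (fun q : Finset (Fin n) × (Fin m → Fin n) => R q.1 q.2 g)
            ∘ (fun ω => (S t ω, fun g' => Aproc t ω g')) := by
        funext ω; simp [hAstep]
      rw [this]; exact h2.comp h1
  -- independence of the holder at time t from S t
  have hInd : ∀ t g (a : Fin n) (T : Set (Finset (Fin n))),
      μ ({ω | Aproc t ω g = a} ∩ S t ⁻¹' T)
        = μ {ω | Aproc t ω g = a} * μ (S t ⁻¹' T) := by
    intro t g a T
    have hd : Disjoint (Finset.range t) ({t} : Finset ℕ) := by simp
    have base := hSindep.indepFun_finset (Finset.range t) {t} hd hSmeas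
    set φ : ((i : Finset.range t) → Finset (Fin n)) → Fin n :=
      fun x => stmt15_alloc R A0 t (fun s => if h : s ∈ Finset.range t then x ⟨s, h⟩ else ∅) g
      with hφdef
    set ψ : ((i : ({t} : Finset ℕ)) → Finset (Fin n)) → Finset (Fin n) :=
      fun x => x ⟨t, Finset.mem_singleton_self t⟩ with hψdef
    have hφ : Measurable φ := measurable_of_countable _
    have hψ : Measurable ψ := measurable_of_countable _
    have comp := (base.comp hφ hψ).measure_inter_preimage_eq_mul {a} T
      (measurableSet_singleton a) trivial
    have e1 : (φ ∘ fun ω (i : Finset.range t) => S i ω) = fun ω => Aproc t ω g := by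
      funext ω
      simp only [Function.comp, hφdef]
      rw [halloc t ω]
      have := stmt15_alloc_congr R A0 (t := t)
        (f := fun s => if h : s ∈ Finset.range t then S s ω else ∅)
        (f' := fun s => S s ω)
        (fun s hs => by simp [Finset.mem_range.2 hs])
      exact congrFun this g
    have e2 : (ψ ∘ fun ω (i : ({t} : Finset ℕ)) => S i ω) = S t := rfl
    rw [e1, e2] at comp
    have e3 : (fun ω => Aproc t ω g) ⁻¹' {a} = {ω | Aproc t ω g = a} := rfl
    rw [e3] at comp
    exact comp
  -- probability that a fixed pair is not in S τ
  have hmiss : ∀ τ (a b : Fin n), a ≠ b →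
      μ (S τ ⁻¹' {s | ¬(a ∈ s ∧ b ∈ s)}) = ENNReal.ofReal (1 - p) := by
    intro τ a b hab
    have hT : μ (S τ ⁻¹' {s | a ∈ s ∧ b ∈ s}) = ENNReal.ofReal p := by
      rw [← Measure.map_apply (hSmeas τ) trivial, hSunif τ, hpdef]
      exact stmt15_unif hk2 hkn a b hab
    have hc : S τ ⁻¹' {s | ¬(a ∈ s ∧ b ∈ s)} = (S τ ⁻¹' {s | a ∈ s ∧ b ∈ s})ᶜ := rfl
    rw [hc, prob_compl_eq_one_sub ((hSmeas τ) trivial), hT,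
      ← ENNReal.ofReal_one, ← ENNReal.ofReal_sub 1 hp0]
  -- the core estimate
  have key : ∀ t g, μ {ω | Aproc t ω g ≠ istar g} ≤ ENNReal.ofReal ((1 - p) ^ t) := by
    intro t g
    induction t with
    | zero =>
      rw [pow_zero, ENNReal.ofReal_one]
      exact prob_le_one
    | succ t ih =>
      have hsub : {ω | Aproc (t+1) ω g ≠ istar g} ⊆
          ⋃ a ∈ Finset.univ.erase (istar g),
            ({ω | Aproc t ω g = a} ∩ S t ⁻¹' {s | ¬(a ∈ s ∧ istar g ∈ s)}) := by
        intro ω hω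
        simp only [Set.mem_setOf_eq] at hω
        have hne : Aproc t ω g ≠ istar g := by
          intro h
          exact hω (by rw [hAstep]; exact hRfix _ _ _ (Or.inl h))
        have hnot : ¬(Aproc t ω g ∈ S t ω ∧ istar g ∈ S t ω) := by
          intro h
          exact hω (by rw [hAstep]; exact hRfix _ _ _ (Or.inr h))
        exact Set.mem_biUnion (Finset.mem_erase.2 ⟨hne, Finset.mem_univ _⟩)
          ⟨rfl, hnot⟩
      have hdisj : Set.PairwiseDisjoint (↑(Finset.univ.erase (istar g)))
          (fun a => {ω | Aproc t ω g = a}) := by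
        intro a _ b _ hab
        apply Set.disjoint_left.2
        intro ω ha hb
        exact hab (ha.symm.trans hb)
      have hmeasa : ∀ a : Fin n, MeasurableSet {ω | Aproc t ω g = a} := fun a =>
        (hAmeas t g) (measurableSet_singleton a)
      have hcover : (⋃ a ∈ Finset.univ.erase (istar g), {ω | Aproc t ω g = a})
          = {ω | Aproc t ω g ≠ istar g} := by
        ext ω
        simp only [Set.mem_iUnion, Set.mem_setOf_eq, Finset.mem_erase, Finset.mem_univ,
          and_true, exists_prop]
        constructor
        · rintro ⟨a, ha, rfl⟩; exact ha
        · intro h; exact ⟨Aproc t ω g, h, rfl⟩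
      calc μ {ω | Aproc (t+1) ω g ≠ istar g}
          ≤ ∑ a ∈ Finset.univ.erase (istar g),
              μ ({ω | Aproc t ω g = a} ∩ S t ⁻¹' {s | ¬(a ∈ s ∧ istar g ∈ s)}) :=
            le_trans (measure_mono hsub) (measure_biUnion_finset_le _ _)
        _ = ∑ a ∈ Finset.univ.erase (istar g),
              μ {ω | Aproc t ω g = a} * ENNReal.ofReal (1 - p) := by
            refine Finset.sum_congr rfl fun a ha => ?_
            rw [hInd t g a _, hmiss t a (istar g) (Finset.mem_erase.1 ha).1]
        _ = (∑ a ∈ Finset.univ.erase (istar g), μ {ω | Aproc t ω g = a})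
              * ENNReal.ofReal (1 - p) := by rw [Finset.sum_mul]
        _ = μ {ω | Aproc t ω g ≠ istar g} * ENNReal.ofReal (1 - p) := by
            rw [← measure_biUnion_finset hdisj (fun a _ => hmeasa a), hcover]
        _ ≤ ENNReal.ofReal ((1 - p) ^ t) * ENNReal.ofReal (1 - p) :=
            mul_le_mul_left ih _
        _ = ENNReal.ofReal ((1 - p) ^ (t + 1)) := by
            rw [← ENNReal.ofReal_mul (pow_nonneg h1p0 t), ← pow_succ]
  -- assembling
  have hsubset : {ω | ∀ g, Aproc t ω g = istar g}
      ⊆ {ω | ∀ B : Fin m → Fin n, ∑ g, u (B g) g ≤ ∑ g, u (Aproc t ω g) g} := by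
    intro ω hω B
    apply Finset.sum_le_sum
    intro g _
    rw [hω g]
    by_cases hBg : B g = istar g
    · rw [hBg]
    · exact (hstar g _ hBg).le
  have hcompl : μ {ω | ∀ g, Aproc t ω g = istar g}ᶜ
      ≤ ENNReal.ofReal ((m : ℝ) * (1 - p) ^ t) := by
    have hc : {ω | ∀ g, Aproc t ω g = istar g}ᶜ
        ⊆ ⋃ g ∈ (Finset.univ : Finset (Fin m)), {ω | Aproc t ω g ≠ istar g} := by
      intro ω hω
      simp only [Set.mem_compl_iff, Set.mem_setOf_eq, not_forall] at hω
      obtain ⟨g, hg⟩ := hω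
      exact Set.mem_biUnion (Finset.mem_univ g) hg
    calc μ {ω | ∀ g, Aproc t ω g = istar g}ᶜ
        ≤ ∑ g : Fin m, μ {ω | Aproc t ω g ≠ istar g} :=
          le_trans (measure_mono hc) (measure_biUnion_finset_le _ _)
      _ ≤ ∑ x : Fin m, ENNReal.ofReal ((1 - p) ^ t) :=
          Finset.sum_le_sum fun x _ => key t x
      _ = (m : ENNReal) * ENNReal.ofReal ((1 - p) ^ t) := by
          rw [Finset.sum_const, Finset.card_univ, Fintype.card_fin, nsmul_eq_mul]
      _ = ENNReal.ofReal ((m : ℝ) * (1 - p) ^ t) := by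
          rw [ENNReal.ofReal_mul (by positivity), ENNReal.ofReal_natCast]
  have hone : (1 : ENNReal) ≤ μ {ω | ∀ g, Aproc t ω g = istar g}
      + μ {ω | ∀ g, Aproc t ω g = istar g}ᶜ := by
    have := measure_union_le (μ := μ) {ω | ∀ g, Aproc t ω g = istar g}
      {ω | ∀ g, Aproc t ω g = istar g}ᶜ
    rwa [Set.union_compl_self, measure_univ] at this
  calc 1 - ENNReal.ofReal ((m : ℝ) * (1 - p) ^ t)
      ≤ 1 - μ {ω | ∀ g, Aproc t ω g = istar g}ᶜ := tsub_le_tsub_left hcompl 1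
    _ ≤ μ {ω | ∀ g, Aproc t ω g = istar g} := tsub_le_iff_right.2 hone
    _ ≤ μ {ω | ∀ B : Fin m → Fin n, ∑ g, u (B g) g ≤ ∑ g, u (Aproc t ω g) g} :=
        measure_mono hsubset
end
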